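/- Let U be a nonempty finite type, n a natural number, g : U → ℝⁿ and h : U → ℝ, and let γ denote the standard Gaussian measure on ℝⁿ (the n-fold product of the standard Gaussian measure on ℝ). Define F : ℝⁿ → ℝ by F(θ) = ∫ max_{u ∈ U} (⟨θ + z, g(u)⟩ + h(u)) dγ(z), and for ū ∈ U the Fenchel-Young loss L(θ, ū) = F(θ) − ⟨θ, g(ū)⟩ − h(ū). If there exists u ∈ U with g(u) ≠ g(ū), then L(θ, ū) > 0 for every θ ∈ ℝⁿ. -/

import Mathlib

open MeasureTheory ProbabilityTheory Real

lemma my_map_eval {n : ℕ} (i : Fin n) :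
    (Measure.pi fun _ : Fin n => gaussianReal 0 1).map (Function.eval i)
      = gaussianReal 0 1 := by
  ext s hs
  rw [Measure.map_apply (measurable_pi_apply i) hs, Set.eval_preimage, Measure.pi_pi]
  rw [Finset.prod_eq_single i (fun j _ hj => by simp [Function.update_of_ne hj])
    (fun hi => absurd (Finset.mem_univ i) hi)]
  simp

lemma my_integrable_id_gauss : Integrable (fun x : ℝ => x) (gaussianReal 0 1) := by
  rw [gaussianReal_of_var_ne_zero 0 one_ne_zero,
    integrable_withDensity_iff (measurable_gaussianPDF 0 1)
      (ae_of_all _ fun x => ENNReal.ofReal_lt_top)]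
  have h := ((integrable_rpow_mul_exp_neg_mul_sq (b := (2:ℝ)⁻¹) (by norm_num)
      (s := 1) (by norm_num)).const_mul ((Real.sqrt (2 * Real.pi))⁻¹))
  refine h.congr (Filter.Eventually.of_forall fun x => ?_)
  simp only []
  rw [show gaussianPDF 0 1 x = ENNReal.ofReal (gaussianPDFReal 0 1 x) from rfl, ENNReal.toReal_ofReal (gaussianPDFReal_nonneg 0 1 x)]
  simp only [gaussianPDFReal, Real.rpow_one, sub_zero, NNReal.coe_one, mul_one]
  rw [show -x ^ 2 / 2 = -(2⁻¹ * x ^ 2) by ring]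
  ring_nf

lemma my_integral_id_gauss : ∫ x, x ∂(gaussianReal 0 1) = 0 := by
  have hmap : (gaussianReal 0 1).map (fun x : ℝ => (-1 : ℝ) * x) = gaussianReal 0 1 := by
    have := gaussianReal_map_const_mul (μ := 0) (v := 1) (-1 : ℝ)
    rw [this]
    norm_num
  have h2 : ∫ x, x ∂(gaussianReal 0 1) = ∫ x, (-1:ℝ) * x ∂(gaussianReal 0 1) := by
    conv_lhs => rw [← hmap]
    exact integral_map ((measurable_id.const_mul _).aemeasurable) aestronglyMeasurable_id
  simp_rw [neg_one_mul] at h2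
  rw [integral_neg] at h2
  linarith

instance : (gaussianReal 0 1).IsOpenPosMeasure := by
  constructor
  intro s hs hne h0
  exact hs.measure_ne_zero volume hne ((gaussianReal_absolutelyContinuous' 0 one_ne_zero) h0)

lemma my_integrable_eval {n : ℕ} (i : Fin n) :
    Integrable (fun z : Fin n → ℝ => z i)
      (Measure.pi fun _ : Fin n => gaussianReal 0 1) := by
  have h := my_integrable_id_gauss
  rw [← my_map_eval i] at h
  exact (integrable_map_measure aestronglyMeasurable_id
    (measurable_pi_apply i).aemeasurable).mp h

lemma my_integral_eval {n : ℕ} (i : Fin n) :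
    ∫ z : Fin n → ℝ, z i ∂(Measure.pi fun _ : Fin n => gaussianReal 0 1) = 0 := by
  have h : ∫ x, x ∂((Measure.pi fun _ : Fin n => gaussianReal 0 1).map (Function.eval i))
      = ∫ z : Fin n → ℝ, z i ∂(Measure.pi fun _ : Fin n => gaussianReal 0 1) :=
    integral_map (measurable_pi_apply i).aemeasurable aestronglyMeasurable_id
  rw [← h, my_map_eval i, my_integral_id_gauss]

lemma my_integrable_sup' {α U : Type*} [MeasurableSpace α] {μ : Measure α}
    {s : Finset U} (hs : s.Nonempty) {f : U → α → ℝ}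
    (hf : ∀ u ∈ s, Integrable (f u) μ) :
    Integrable (fun z => s.sup' hs (fun u => f u z)) μ := by
  revert hf
  induction hs using Finset.Nonempty.cons_induction with
  | singleton u =>
      intro hf
      have h0 := hf u (Finset.mem_singleton_self u)
      simp only [Finset.sup'_singleton]
      exact h0
  | cons u s hu hsne ih =>
      intro hf
      simp only [Finset.sup'_cons (H := hsne)]
      exact (hf u (by simp)).sup (ih fun v hv => hf v (by simp [hv]))

/-- Strict positivity of the perturbation-based Fenchel-Young loss: whenever some decision
`u` has a feature vector `g u` different from `g ubar`, the loss
`L(θ, ū) = F(θ) − ⟨θ, g(ū)⟩ − h(ū)` is strictly positive for every `θ`, where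
`F(θ) = ∫ max_{u ∈ U} (⟨θ + z, g(u)⟩ + h(u)) dγ(z)` and `γ` is the standard Gaussian
measure on `ℝⁿ`. -/
theorem stmt_6 {U : Type*} [Fintype U] [Nonempty U] (n : ℕ)
    (g : U → (Fin n → ℝ)) (h : U → ℝ)
    (F : (Fin n → ℝ) → ℝ)
    (hF : ∀ θ : Fin n → ℝ,
      F θ = ∫ z : Fin n → ℝ,
        (Finset.univ.sup' Finset.univ_nonempty
          fun u : U => (∑ i, (θ i + z i) * g u i) + h u)
        ∂(Measure.pi fun _ : Fin n => gaussianReal 0 1))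
    (L : (Fin n → ℝ) → U → ℝ)
    (hL : ∀ (θ : Fin n → ℝ) (ubar : U),
      L θ ubar = F θ - (∑ i, θ i * g ubar i) - h ubar)
    (ubar : U) (hne : ∃ u : U, g u ≠ g ubar) :
    ∀ θ : Fin n → ℝ, 0 < L θ ubar := by
  intro θ
  obtain ⟨u, hu⟩ := hne
  set γ : Measure (Fin n → ℝ) := Measure.pi fun _ : Fin n => gaussianReal 0 1 with hγ
  have hint : ∀ v : U,
      Integrable (fun z : Fin n → ℝ => (∑ i, (θ i + z i) * g v i) + h v) γ := by
    intro v
    refine Integrable.add ?_ (integrable_const _)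
    refine integrable_finset_sum _ fun i _ => ?_
    exact ((integrable_const (θ i)).add (my_integrable_eval i)).mul_const _
  have hsupint : Integrable
      (fun z : Fin n → ℝ => Finset.univ.sup' Finset.univ_nonempty
        fun v : U => (∑ i, (θ i + z i) * g v i) + h v) γ :=
    my_integrable_sup' _ (fun v _ => hint v)
  -- the integral of an affine function
  have hIA : ∀ v : U,
      ∫ z : Fin n → ℝ, ((∑ i, (θ i + z i) * g v i) + h v) ∂γ
        = (∑ i, θ i * g v i) + h v := by
    intro v
    rw [integral_add (by exact integrable_finset_sum _ fun i _ =>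
        ((integrable_const (θ i)).add (my_integrable_eval i)).mul_const _)
      (integrable_const _), integral_const]
    have hmu : γ Set.univ = 1 := measure_univ
    have hfs := integral_finset_sum (μ := γ) Finset.univ
      (f := fun (i : Fin n) (z : Fin n → ℝ) => (θ i + z i) * g v i)
      (fun i _ => ((integrable_const (θ i)).add (my_integrable_eval i)).mul_const _)
    rw [hfs]
    have hone : ∀ i, ∫ z : Fin n → ℝ, (θ i + z i) * g v i ∂γ = θ i * g v i := by
      intro i
      rw [integral_mul_const, integral_add (integrable_const _) (my_integrable_eval i),
        integral_const, my_integral_eval i]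
      simp [hmu]
    simp only [hone]
    simp [hmu]
  -- L equals the integral of the nonnegative gap function
  set f : (Fin n → ℝ) → ℝ := fun z =>
    (Finset.univ.sup' Finset.univ_nonempty
      fun v : U => (∑ i, (θ i + z i) * g v i) + h v)
      - ((∑ i, (θ i + z i) * g ubar i) + h ubar) with hf
  have hfint : Integrable f γ := hsupint.sub (hint ubar)
  have key : L θ ubar = ∫ z, f z ∂γ := by
    rw [hL, hF, integral_sub hsupint (hint ubar), hIA ubar]
    ring
  have hfnn : ∀ z, 0 ≤ f z := by
    intro z
    have := Finset.le_sup' (fun v : U => (∑ i, (θ i + z i) * g v i) + h v)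
      (Finset.mem_univ ubar)
    simp only [hf]
    linarith
  -- the strictly positive event
  set a : Fin n → ℝ := fun i => g u i - g ubar i with ha
  obtain ⟨j, hj⟩ : ∃ j, a j ≠ 0 := by
    by_contra hc
    push_neg at hc
    exact hu (funext fun i => by have := hc i; simp only [ha] at this; linarith)
  set c : ℝ := ((∑ i, θ i * g ubar i) + h ubar) - ((∑ i, θ i * g u i) + h u) with hc
  set S : Set (Fin n → ℝ) := {z | c < ∑ i, z i * a i} with hS
  have hSopen : IsOpen S :=
    isOpen_lt continuous_const
      (continuous_finset_sum _ fun i _ => (continuous_apply i).mul continuous_const)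
  have hSne : S.Nonempty := by
    refine ⟨Pi.single j ((c + 1) / a j), ?_⟩
    have hsum : ∑ i, Pi.single (M := fun _ : Fin n => ℝ) j ((c + 1) / a j) i * a i
        = Pi.single (M := fun _ : Fin n => ℝ) j ((c + 1) / a j) j * a j :=
      Finset.sum_eq_single j
        (fun i _ hij => by rw [Pi.single_eq_of_ne hij, zero_mul])
        (fun hij => absurd (Finset.mem_univ j) hij)
    rw [Pi.single_eq_same] at hsum

    simp only [hS, Set.mem_setOf_eq, hsum, div_mul_cancel₀ _ hj]
    linarith
  haveI : γ.IsOpenPosMeasure := by rw [hγ]; infer_instance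
  have hγS : 0 < γ S := hSopen.measure_pos γ hSne
  have hsub : S ⊆ Function.support f := by
    intro z hz
    have hzS : c < ∑ i, z i * a i := hz
    have hexp : ∀ v : U, ∑ i, (θ i + z i) * g v i
        = (∑ i, θ i * g v i) + ∑ i, z i * g v i := by
      intro v
      rw [← Finset.sum_add_distrib]
      exact Finset.sum_congr rfl fun i _ => by ring
    have haa : ∑ i, z i * a i = (∑ i, z i * g u i) - ∑ i, z i * g ubar i := by
      simp only [ha, mul_sub]
      exact Finset.sum_sub_distrib _ _
    have hlt : (∑ i, (θ i + z i) * g ubar i) + h ubar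
        < (∑ i, (θ i + z i) * g u i) + h u := by
      rw [hexp u, hexp ubar]
      rw [haa] at hzS
      simp only [hc] at hzS
      linarith
    have hle := Finset.le_sup' (fun v : U => (∑ i, (θ i + z i) * g v i) + h v)
      (Finset.mem_univ u)
    have : 0 < f z := by simp only [hf]; linarith
    exact ne_of_gt this
  have hpos : 0 < ∫ z, f z ∂γ := by
    rw [integral_pos_iff_support_of_nonneg_ae (ae_of_all _ hfnn) hfint]
    exact lt_of_lt_of_le hγS (measure_mono hsub)
  linarith [key, hpos]
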